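/- Let K be a field and T : M_n(K) → M_n(K) a linear map preserving the L-relation. Then the kernel of T equals ρ(V_T) = {A ∈ M_n(K) : every row of A lies in V_T}, where V_T = {v ∈ Kⁿ : v is a row of some matrix in ker(T)}. -/

import Mathlib

/-- The row space of a square matrix: the span of its rows. -/
def rowSpace {K : Type*} [Field K] {n : ℕ} (A : Matrix (Fin n) (Fin n) K) :
    Submodule K (Fin n → K) :=
  Submodule.span K (Set.range A)

lemma rowSpace_eq_bot {K : Type*} [Field K] {n : ℕ} {A : Matrix (Fin n) (Fin n) K}
    (h : rowSpace A = ⊥) : A = 0 := by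
  have := Submodule.span_eq_bot.mp h
  funext i j
  have := this (A i) ⟨i, rfl⟩
  simp [this]

lemma row_mul {K : Type*} [Field K] {n : ℕ} (Y B : Matrix (Fin n) (Fin n) K) (r : Fin n) :
    (Y * B) r = ∑ k, Y r k • B k := by
  funext j
  simp [Matrix.mul_apply, Finset.sum_apply]

lemma rowSpace_mul_le {K : Type*} [Field K] {n : ℕ} (Y B : Matrix (Fin n) (Fin n) K) :
    rowSpace (Y * B) ≤ rowSpace B := by
  rw [rowSpace, Submodule.span_le]
  rintro _ ⟨r, rfl⟩
  rw [row_mul]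
  exact Submodule.sum_mem _ fun k _ =>
    Submodule.smul_mem _ _ (Submodule.subset_span ⟨k, rfl⟩)

lemma rowSpace_unit_mul {K : Type*} [Field K] {n : ℕ} {Y : Matrix (Fin n) (Fin n) K}
    (hY : IsUnit Y) (B : Matrix (Fin n) (Fin n) K) :
    rowSpace (Y * B) = rowSpace B := by
  obtain ⟨U, rfl⟩ := hY
  refine le_antisymm (rowSpace_mul_le _ B) ?_
  have h : B = (U⁻¹ : (Matrix (Fin n) (Fin n) K)ˣ) *
      ((U : (Matrix (Fin n) (Fin n) K)ˣ) * B : Matrix (Fin n) (Fin n) K) := by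
    rw [← mul_assoc, Units.inv_mul, one_mul]
  calc rowSpace B = rowSpace (((U⁻¹ : (Matrix (Fin n) (Fin n) K)ˣ) : Matrix (Fin n) (Fin n) K)
        * ((U : Matrix (Fin n) (Fin n) K) * B)) := by rw [← h]
    _ ≤ rowSpace ((U : Matrix (Fin n) (Fin n) K) * B) := rowSpace_mul_le _ _

section
variable {K : Type*} [Field K] {n : ℕ}
  (T : Matrix (Fin n) (Fin n) K →ₗ[K] Matrix (Fin n) (Fin n) K)
  (hL : ∀ A B : Matrix (Fin n) (Fin n) K,
      rowSpace A = rowSpace B → rowSpace (T A) = rowSpace (T B))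

include hL

lemma ker_sat {B C : Matrix (Fin n) (Fin n) K} (hB : T B = 0)
    (h : rowSpace C = rowSpace B) : T C = 0 := by
  apply rowSpace_eq_bot
  rw [hL C B h, hB]
  rw [rowSpace]
  simp [Submodule.span_eq_bot]
  intro i
  rintro ⟨_, rfl⟩; rfl

lemma unit_mul_ker {B Y : Matrix (Fin n) (Fin n) K} (hB : T B = 0) (hY : IsUnit Y) :
    T (Y * B) = 0 :=
  ker_sat T hL hB (rowSpace_unit_mul hY B)

lemma stdBasis_mul_ker {B : Matrix (Fin n) (Fin n) K} (hB : T B = 0) (i j : Fin n) (c : K) :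
    T (Matrix.single i j c * B) = 0 := by
  rcases eq_or_ne i j with rfl | hij
  · -- diagonal case
    by_cases hex : ∃ j' : Fin n, j' ≠ i
    · obtain ⟨j', hj'⟩ := hex
      set P : Matrix (Fin n) (Fin n) K := (Equiv.swap i j').permMatrix K with hP
      have hProw : P j' = Pi.single i 1 := by
        funext k
        simp [hP, Equiv.Perm.permMatrix, PEquiv.toMatrix_apply, Equiv.toPEquiv_apply,
          Equiv.swap_apply_right, Pi.single_apply, eq_comm]
      have hPunit : IsUnit P := by
        rw [Matrix.isUnit_iff_isUnit_det, hP, Matrix.det_permutation]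
        simp [Equiv.Perm.sign_swap (Ne.symm hj')]
      set A : Matrix (Fin n) (Fin n) K := P + Matrix.single i i 1 with hA
      have hAeq : A = Matrix.updateRow P i (P i + Pi.single i 1) := by
        ext r k
        rcases eq_or_ne r i with rfl | hr
        · simp [hA, Matrix.single, Pi.single_apply, eq_comm]
        · simp [hA, Matrix.updateRow_ne hr, Matrix.single, Ne.symm hr]
      have hAunit : IsUnit A := by
        rw [Matrix.isUnit_iff_isUnit_det, hAeq, Matrix.det_updateRow_add,
          Matrix.updateRow_eq_self]
        have hz : (Matrix.updateRow P i (Pi.single i 1)).det = 0 := by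
          apply Matrix.det_zero_of_row_eq (Ne.symm hj')
          rw [Matrix.updateRow_self, Matrix.updateRow_ne hj', hProw]
        rw [hz, add_zero, hP, Matrix.det_permutation]
        simp [Equiv.Perm.sign_swap (Ne.symm hj')]
      have hdec : Matrix.single i i c = c • A - c • P := by
        rw [← smul_sub, hA]
        simp
      rw [hdec, Matrix.sub_mul, map_sub, Matrix.smul_mul, Matrix.smul_mul,
        map_smul, map_smul, unit_mul_ker T hL hB hAunit, unit_mul_ker T hL hB hPunit]
      simp
    · push_neg at hex
      have hdec : Matrix.single i i c = c • (1 : Matrix (Fin n) (Fin n) K) := by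
        ext r k
        have hr := hex r
        have hk := hex k
        subst hr; subst hk
        simp [Matrix.single]
      rw [hdec, Matrix.smul_mul, map_smul, Matrix.one_mul, hB, smul_zero]
  · -- off-diagonal: transvection
    have hunit : IsUnit (Matrix.transvection i j c) := by
      rw [Matrix.isUnit_iff_isUnit_det, Matrix.det_transvection_of_ne i j hij c]
      exact isUnit_one
    have hdec : Matrix.single i j c
        = Matrix.transvection i j c - 1 := by
      rw [Matrix.transvection]; abel
    rw [hdec, Matrix.sub_mul, map_sub, Matrix.one_mul, hB,
      unit_mul_ker T hL hB hunit, sub_zero]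

lemma singleRow_ker {B : Matrix (Fin n) (Fin n) K} (hB : T B = 0) {w : Fin n → K}
    (hw : w ∈ rowSpace B) (i : Fin n) :
    T (Matrix.of fun r k => if r = i then w k else 0) = 0 := by
  obtain ⟨c, hc⟩ := (Submodule.mem_span_range_iff_exists_fun K).mp hw
  set Y : Matrix (Fin n) (Fin n) K := Matrix.of fun r m => if r = i then c m else 0 with hY
  have hYdec : Y = ∑ j, Matrix.single i j (c j) := by
    ext r m
    by_cases h : r = i
    · simp [hY, h, Matrix.single, Matrix.sum_apply, Finset.sum_ite_eq, eq_comm]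
    · simp [hY, h, Matrix.single, Matrix.sum_apply, Ne.symm h]
  have hprod : (Matrix.of fun r k => if r = i then w k else 0) = Y * B := by
    ext r k
    rw [Matrix.mul_apply]
    by_cases h : r = i
    · subst h
      simp only [hY, Matrix.of_apply, if_pos rfl]
      rw [← hc]
      simp [Finset.sum_apply]
    · simp [hY, h]
  rw [hprod, hYdec, Finset.sum_mul, map_sum]
  exact Finset.sum_eq_zero fun j _ => stdBasis_mul_ker T hL hB i j (c j)

end

/-- For a linear `L`-preserver `T` on `M_n(K)`, the kernel of `T` equals
`ρ(V_T)`, the set of matrices all of whose rows lie in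
`V_T = {v : v is a row of some matrix in ker T}`. -/
theorem ker_eq_rho_VT
    {K : Type*} [Field K] {n : ℕ}
    (T : Matrix (Fin n) (Fin n) K →ₗ[K] Matrix (Fin n) (Fin n) K)
    (hL : ∀ A B : Matrix (Fin n) (Fin n) K,
      rowSpace A = rowSpace B → rowSpace (T A) = rowSpace (T B)) :
    ∀ A : Matrix (Fin n) (Fin n) K,
      T A = 0 ↔ ∀ i : Fin n,
        A i ∈ {v : Fin n → K |
          ∃ B : Matrix (Fin n) (Fin n) K, T B = 0 ∧ ∃ j : Fin n, B j = v} := by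
  intro A
  constructor
  · intro hA i
    exact ⟨A, hA, i, rfl⟩
  · intro h
    have hrow : ∀ i : Fin n, T (Matrix.of fun r k => if r = i then A i k else 0) = 0 := by
      intro i
      obtain ⟨B, hB, j, hj⟩ := h i
      apply singleRow_ker T hL hB
      rw [← hj]
      exact Submodule.subset_span ⟨j, rfl⟩
    have hsum : A = ∑ i, (Matrix.of fun r k => if r = i then A i k else 0) := by
      ext r k
      simp [Matrix.sum_apply, Finset.sum_ite_eq]
    rw [hsum, map_sum]
    exact Finset.sum_eq_zero fun i _ => hrow i
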